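/- Let A be a strictly upper triangular n×n complex matrix, and for 1 ≤ i ≤ n set c_i := Σ_{j=i+1}^n |a_{ij}|², so that Σ_{i=1}^{n} c_i = |A|² (Frobenius norm squared). Then there exists an index m with 1 ≤ m ≤ n-1 such that c_m - Σ_{j=1}^{m-1} c_j ≥ |A|²/2^(n-1). -/

import Mathlib

open Matrix Finset

lemma aux_partial (d : ℕ → ℝ) (ε : ℝ) (N : ℕ)
    (h : ∀ k < N, d k < (∑ j ∈ Finset.range k, d j) + ε) :
    ∀ k ≤ N, (∑ j ∈ Finset.range k, d j) ≤ (2 ^ k - 1) * ε := by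
  intro k hk
  induction k with
  | zero => simp
  | succ k ih =>
    have ihk := ih (by omega)
    have h1 := h k (by omega)
    rw [Finset.sum_range_succ, pow_succ]
    nlinarith [ihk, h1]

theorem stmt_2 (n : ℕ) (hn : 2 ≤ n) (A : Matrix (Fin n) (Fin n) ℂ)
    (hA : ∀ i j : Fin n, j ≤ i → A i j = 0)
    (c : Fin n → ℝ)
    (hc : ∀ i : Fin n, c i = ∑ j : Fin n, if i < j then ‖A i j‖ ^ 2 else 0) :
    ∃ m : Fin n, (m : ℕ) < n - 1 ∧
      c m - (∑ j : Fin n, if j < m then c j else 0)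
        ≥ (∑ i : Fin n, ∑ j : Fin n, ‖A i j‖ ^ 2) / 2 ^ (n - 1) := by
  set S : ℝ := ∑ i : Fin n, ∑ j : Fin n, ‖A i j‖ ^ 2 with hS
  have hrow : ∀ i : Fin n, (∑ j : Fin n, ‖A i j‖ ^ 2) = c i := by
    intro i
    rw [hc i]
    apply Finset.sum_congr rfl
    intro j _
    by_cases hij : i < j
    · simp [hij]
    · simp [hij, hA i j (le_of_not_gt hij)]
  have hcnonneg : ∀ i : Fin n, 0 ≤ c i := by
    intro i
    rw [← hrow i]
    exact Finset.sum_nonneg fun j _ => by positivity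
  have hSsum : S = ∑ i : Fin n, c i := Finset.sum_congr rfl fun i _ => hrow i
  have hSnonneg : 0 ≤ S := hSsum ▸ Finset.sum_nonneg fun i _ => hcnonneg i
  set d : ℕ → ℝ := fun k => if h : k < n then c ⟨k, h⟩ else 0 with hd
  have hdval : ∀ (k : ℕ) (h : k < n), d k = c ⟨k, h⟩ := by
    intro k h; simp [hd, h]
  have hlast : d (n - 1) = 0 := by
    rw [hdval (n-1) (by omega), hc]
    apply Finset.sum_eq_zero
    intro j _
    have : ¬ ((⟨n-1, by omega⟩ : Fin n) < j) := by
      simp [Fin.lt_def]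
      omega
    simp [this]
  have hPsum : ∀ (m : ℕ) (h : m < n),
      (∑ j : Fin n, if j < (⟨m, h⟩ : Fin n) then c j else 0) = ∑ j ∈ Finset.range m, d j := by
    intro m h
    calc (∑ j : Fin n, if j < (⟨m, h⟩ : Fin n) then c j else 0)
        = ∑ j : Fin n, (fun k => if k < m then d k else 0) (j : ℕ) := by
          apply Finset.sum_congr rfl
          intro j _
          simp only [Fin.lt_def]
          by_cases hjm : (j : ℕ) < m
          · simp [hjm, hdval j j.2]
          · simp [hjm]
      _ = ∑ j ∈ Finset.range n, (if j < m then d j else 0) := by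
          exact Fin.sum_univ_eq_sum_range (fun k => if k < m then d k else 0) n
      _ = ∑ j ∈ Finset.range m, (if j < m then d j else 0) := by
          refine (Finset.sum_subset (Finset.range_subset_range.2 h.le) ?_).symm
          intro x hx hx2
          simp only [Finset.mem_range] at hx hx2
          simp [Nat.not_lt.2 (Nat.le_of_not_lt hx2)]
      _ = ∑ j ∈ Finset.range m, d j := by
          apply Finset.sum_congr rfl
          intro j hj
          simp only [Finset.mem_range] at hj
          simp [hj]
  have hStot : S = ∑ j ∈ Finset.range (n-1), d j := by
    have h1 : S = ∑ j ∈ Finset.range n, d j := by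
      rw [hSsum]
      calc ∑ i : Fin n, c i = ∑ i : Fin n, d (i : ℕ) := by
            apply Finset.sum_congr rfl
            intro i _
            rw [hdval i i.2]
        _ = ∑ j ∈ Finset.range n, d j := Fin.sum_univ_eq_sum_range _ n
    have h2 : ∑ j ∈ Finset.range n, d j = ∑ j ∈ Finset.range (n-1), d j + d (n-1) := by
      rw [← Finset.sum_range_succ, Nat.sub_add_cancel (by omega : 1 ≤ n)]
    rw [h1, h2, hlast, add_zero]
  by_cases hS0 : S = 0
  · refine ⟨⟨0, by omega⟩, by simpa using (by omega : 0 < n - 1), ?_⟩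
    rw [hS0]
    have h0 : (∑ j : Fin n, if j < (⟨0, by omega⟩ : Fin n) then c j else 0) = 0 := by
      rw [hPsum 0 (by omega)]; simp
    rw [h0]
    simp
    exact hcnonneg _
  · have hSpos : 0 < S := lt_of_le_of_ne hSnonneg (Ne.symm hS0)
    by_contra hcon
    push_neg at hcon
    set ε : ℝ := S / 2 ^ (n-1) with hε
    have hεpos : 0 < ε := by positivity
    have key : ∀ k < n - 1, d k < (∑ j ∈ Finset.range k, d j) + ε := by
      intro k hk
      have hkn : k < n := by omega
      have hlt := hcon ⟨k, hkn⟩ hk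
      rw [hPsum k hkn] at hlt
      rw [hdval k hkn]
      linarith [hlt]
    have hfin := aux_partial d ε (n-1) key (n-1) le_rfl
    rw [← hStot] at hfin
    have h2 : (0:ℝ) < 2 ^ (n-1) := by positivity
    rw [hε, sub_mul, one_mul, mul_div_cancel₀ _ (ne_of_gt h2)] at hfin
    nlinarith [hSpos, hεpos]
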